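/- If a joint distribution factorizes according to a DAG D, and sets A, B are separated by S in the moral graph of the ancestral subgraph of D generated by A ∪ B ∪ S, then A ⊥⊥ B | S holds in the distribution. -/

import Mathlib

/-- Skeleton (undirected) adjacency of a directed graph. -/
def Skel {V : Type*} (E : V → V → Prop) (a b : V) : Prop := E a b ∨ E b a

/-- Directed reachability: `Reaches E a b` iff there is a directed path from `a` to `b`. -/
def Reaches {V : Type*} (E : V → V → Prop) : V → V → Prop := Relation.ReflTransGen E

/-- A directed graph is acyclic if no edge can be completed to a directed cycle. -/
def IsAcyclicD {V : Type*} (E : V → V → Prop) : Prop := ∀ a b : V, E a b → ¬ Reaches E b a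

/-- `(a, b, c)` is an immorality (v-structure): `a → b ← c` with `a, c` non-adjacent. -/
def Immorality {V : Type*} (E : V → V → Prop) (a b c : V) : Prop :=
  a ≠ c ∧ E a b ∧ E c b ∧ ¬ Skel E a c

/-- `p` is an (undirected) trail from `a` to `b` in the skeleton of `E`. -/
def IsTrail {V : Type*} (E : V → V → Prop) (a b : V) (p : List V) : Prop :=
  p.Chain' (Skel E) ∧ p.head? = some a ∧ p.getLast? = some b ∧ p.Nodup ∧ 2 ≤ p.length

/-- A consecutive triple `x - y - z` on a trail is blocked by `S`:
a collider `x → y ← z` blocks unless `y` has a descendant (possibly itself) in `S`;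
a non-collider blocks iff `y ∈ S`. -/
def BlockedTriple {V : Type*} (E : V → V → Prop) (S : Set V) (x y z : V) : Prop :=
  ((E x y ∧ E z y) ∧ ∀ d ∈ S, ¬ Reaches E y d) ∨ (¬ (E x y ∧ E z y) ∧ y ∈ S)

/-- A trail is blocked by `S` if some consecutive triple on it is blocked. -/
def BlockedTrail {V : Type*} (E : V → V → Prop) (S : Set V) (p : List V) : Prop :=
  ∃ l x y z r, p = l ++ x :: y :: z :: r ∧ BlockedTriple E S x y z

/-- d-separation: every trail between `A` and `B` is blocked by `S`. -/
def DSep {V : Type*} (E : V → V → Prop) (A B S : Set V) : Prop :=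
  ∀ a ∈ A, ∀ b ∈ B, ∀ p : List V, IsTrail E a b p → BlockedTrail E S p

/-- Markov equivalence: the same d-separations among disjoint sets. -/
def MarkovEquiv {V : Type*} (E₁ E₂ : V → V → Prop) : Prop :=
  ∀ A B S : Set V, Disjoint A B → Disjoint A S → Disjoint B S →
    (DSep E₁ A B S ↔ DSep E₂ A B S)

/-- The ancestral closure of `W`: all vertices with a directed path into `W`. -/
def AncSet {V : Type*} (E : V → V → Prop) (W : Set V) : Set V :=
  {v | ∃ w ∈ W, Reaches E v w}

/-- The subgraph induced on a vertex set. -/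
def InducedE {V : Type*} (E : V → V → Prop) (W : Set V) (a b : V) : Prop :=
  E a b ∧ a ∈ W ∧ b ∈ W

/-- Moral graph adjacency: skeleton edges plus marriages of common parents. -/
def Moral {V : Type*} (E : V → V → Prop) (a b : V) : Prop :=
  a ≠ b ∧ (E a b ∨ E b a ∨ ∃ c, E a c ∧ E b c)

/-- `p` is a path from `a` to `b` in the undirected graph `G`. -/
def UPath {V : Type*} (G : V → V → Prop) (a b : V) (p : List V) : Prop :=
  p.Chain' G ∧ p.head? = some a ∧ p.getLast? = some b ∧ p.Nodup

/-- Separation in an undirected graph: every path from `A` to `B` meets `S`. -/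
def USep {V : Type*} (G : V → V → Prop) (A B S : Set V) : Prop :=
  ∀ a ∈ A, ∀ b ∈ B, ∀ p : List V, UPath G a b p → ∃ s ∈ S, s ∈ p

open MeasureTheory ProbabilityTheory

/-- The event that the variables indexed by `W` take the values prescribed by `x`. -/
def eventOn {V Ω α : Type*} (X : V → Ω → α) (W : Set V) (x : V → α) : Set Ω :=
  {ω | ∀ v ∈ W, X v ω = x v}

/-- Conditional independence of the families `(X_v)_{v ∈ A}` and `(X_v)_{v ∈ B}` given
`(X_v)_{v ∈ S}`, for discrete variables, via cross-multiplied factorization of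
probability mass functions. -/
def CCI {V Ω α : Type*} [MeasurableSpace Ω] (P : Measure Ω)
    (X : V → Ω → α) (A B S : Set V) : Prop :=
  ∀ x : V → α,
    P (eventOn X S x) * P (eventOn X (A ∪ B ∪ S) x) =
      P (eventOn X (A ∪ S) x) * P (eventOn X (B ∪ S) x)

/-- The joint distribution factorizes according to the DAG `E`: the probability of any
joint configuration is the product over vertices of the conditional probability of the
vertex's value given its parents' values. -/
def DAGFactorizes {V Ω α : Type*} [Fintype V] [MeasurableSpace Ω] (P : Measure Ω)
    (E : V → V → Prop) (X : V → Ω → α) : Prop :=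
  ∀ x : V → α,
    P (eventOn X Set.univ x) =
      ∏ v : V, (P[|eventOn X {w | E w v} x]) {ω | X v ω = x v}

section AuxLemmas
open Classical MeasureTheory ProbabilityTheory
set_option linter.unusedSectionVars false

variable {V Ω α : Type*} [Fintype V] [DecidableEq V] [Fintype α] [MeasurableSpace Ω]
  [MeasurableSpace α] [MeasurableSingletonClass α]

lemma eventOn_congr {X : V → Ω → α} {W : Set V} {x y : V → α}
    (h : ∀ v ∈ W, x v = y v) : eventOn X W x = eventOn X W y := by
  ext ω
  constructor <;> intro hω v hv
  · rw [← h v hv]; exact hω v hv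
  · rw [h v hv]; exact hω v hv

lemma eventOn_mono {X : V → Ω → α} {W W' : Set V} (h : W ⊆ W') (x : V → α) :
    eventOn X W' x ⊆ eventOn X W x := fun _ hω v hv => hω v (h hv)

lemma measurableSet_eventOn {X : V → Ω → α} (hX : ∀ v, Measurable (X v)) (W : Set V)
    (x : V → α) : MeasurableSet (eventOn X W x) := by
  have : eventOn X W x = ⋂ v ∈ W, X v ⁻¹' {x v} := by
    ext ω; simp [eventOn]
  rw [this]
  exact MeasurableSet.biInter (Set.to_countable _)
    fun v _ => (hX v) (measurableSet_singleton _)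

/-- The conditional factor of vertex `v` at configuration `x`. -/
noncomputable def condP (P : Measure Ω) (E : V → V → Prop) (X : V → Ω → α) (v : V)
    (x : V → α) : ENNReal :=
  (P[|eventOn X {w | E w v} x]) {ω | X v ω = x v}

lemma condP_congr {P : Measure Ω} {E : V → V → Prop} {X : V → Ω → α} {v : V} {x y : V → α}
    (hpa : ∀ w, E w v → x w = y w) (hv : x v = y v) :
    condP P E X v x = condP P E X v y := by
  have heq : eventOn X {w | E w v} x = eventOn X {w | E w v} y :=
    eventOn_congr (W := {w | E w v}) (fun w hw => hpa w hw)
  unfold condP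
  rw [heq, hv]

lemma sum_P_eventOn_insert {P : Measure Ω} {X : V → Ω → α} (hX : ∀ v, Measurable (X v))
    {U : Set V} {v : V} (hv : v ∉ U) (x : V → α) :
    P (eventOn X U x) = ∑ a : α, P (eventOn X (insert v U) (Function.update x v a)) := by
  have hunion : eventOn X U x = ⋃ a : α, eventOn X (insert v U) (Function.update x v a) := by
    ext ω
    constructor
    · intro hω
      refine Set.mem_iUnion.2 ⟨X v ω, fun u hu => ?_⟩
      rcases hu with rfl | hu
      · simp
      · rw [Function.update_of_ne (by rintro rfl; exact hv hu)]
        exact hω u hu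
    · intro hω u hu
      rcases Set.mem_iUnion.1 hω with ⟨a, ha⟩
      have := ha u (Set.mem_insert_of_mem _ hu)
      rwa [Function.update_of_ne (by rintro rfl; exact hv hu)] at this
  rw [hunion, measure_iUnion ?_ ?_, tsum_fintype]
  · intro a b hab
    refine Set.disjoint_left.2 fun ω h1 h2 => hab ?_
    have e1 := h1 v (Set.mem_insert _ _)
    have e2 := h2 v (Set.mem_insert _ _)
    rw [Function.update_self] at e1 e2
    rw [← e1, ← e2]
  · intro a
    exact measurableSet_eventOn hX _ _

lemma sum_condP_update {P : Measure Ω} [IsProbabilityMeasure P] {E : V → V → Prop}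
    {X : V → Ω → α} (hX : ∀ v, Measurable (X v)) {v : V} (hvv : ¬ E v v) (x : V → α) :
    ∑ a : α, condP P E X v (Function.update x v a) =
      (P (eventOn X {w | E w v} x))⁻¹ * P (eventOn X {w | E w v} x) := by
  have hev : ∀ a : α, eventOn X {w | E w v} (Function.update x v a) =
      eventOn X {w | E w v} x := by
    intro a
    exact eventOn_congr fun w hw => Function.update_of_ne (by rintro rfl; exact hvv hw) _ _
  have hterm : ∀ a : α, condP P E X v (Function.update x v a) =
      (P[|eventOn X {w | E w v} x]) {ω | X v ω = a} := by
    intro a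
    unfold condP
    rw [hev a, Function.update_self]
  rw [Finset.sum_congr rfl fun a _ => hterm a]
  have hsum : ∑ a : α, (P[|eventOn X {w | E w v} x]) {ω | X v ω = a} =
      (P[|eventOn X {w | E w v} x]) Set.univ := by
    rw [← tsum_fintype (L := SummationFilter.unconditional _), ← measure_iUnion ?_ ?_]
    · congr 1
      ext ω; simp
    · intro a b hab
      refine Set.disjoint_left.2 fun ω h1 h2 => hab ?_
      rw [← h1, ← h2]
    · intro a
      exact (hX v) (measurableSet_singleton _)
  rw [hsum, ProbabilityTheory.cond_apply (measurableSet_eventOn hX _ _), Set.inter_univ]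

lemma sum_condP_update_le_one {P : Measure Ω} [IsProbabilityMeasure P] {E : V → V → Prop}
    {X : V → Ω → α} (hX : ∀ v, Measurable (X v)) {v : V} (hvv : ¬ E v v) (x : V → α) :
    ∑ a : α, condP P E X v (Function.update x v a) ≤ 1 := by
  rw [sum_condP_update hX hvv x]
  by_cases h0 : P (eventOn X {w | E w v} x) = 0
  · rw [h0, mul_zero]; exact zero_le_one
  · rw [ENNReal.inv_mul_cancel h0 (measure_ne_top P _)]

lemma sum_condP_update_eq_one {P : Measure Ω} [IsProbabilityMeasure P] {E : V → V → Prop}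
    {X : V → Ω → α} (hX : ∀ v, Measurable (X v)) {v : V} (hvv : ¬ E v v) (x : V → α)
    (h0 : P (eventOn X {w | E w v} x) ≠ 0) :
    ∑ a : α, condP P E X v (Function.update x v a) = 1 := by
  rw [sum_condP_update hX hvv x, ENNReal.inv_mul_cancel h0 (measure_ne_top P _)]

end AuxLemmas
section AuxLemmas2
open Classical MeasureTheory ProbabilityTheory
set_option linter.unusedSectionVars false

variable {V Ω α : Type*} [Fintype V] [DecidableEq V] [Fintype α] [MeasurableSpace Ω]
  [MeasurableSpace α] [MeasurableSingletonClass α]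

lemma acyclic_not_self {E : V → V → Prop} (hE : IsAcyclicD E) (v : V) : ¬ E v v :=
  fun h => hE v v h Relation.ReflTransGen.refl

lemma acyclic_antisymm {E : V → V → Prop} (hE : IsAcyclicD E) {a b : V}
    (h1 : Reaches E a b) (h2 : Reaches E b a) : a = b := by
  by_contra hne
  rcases (Relation.ReflTransGen.cases_head h1) with rfl | ⟨u, hu, h⟩
  · exact hne rfl
  · exact hE a u hu (Relation.ReflTransGen.trans h h2)

lemma exists_reach_min {E : V → V → Prop} (hE : IsAcyclicD E) {S₀ : Finset V}
    (h : S₀.Nonempty) : ∃ v ∈ S₀, ∀ w ∈ S₀, Reaches E w v → w = v := by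
  obtain ⟨v, hv, hmin⟩ := S₀.exists_min_image
    (fun v => (S₀.filter (fun w => Reaches E w v)).card) h
  refine ⟨v, hv, fun w hw hr => ?_⟩
  by_contra hne
  have hsub : S₀.filter (fun u => Reaches E u w) ⊂ S₀.filter (fun u => Reaches E u v) := by
    refine Finset.ssubset_iff_of_subset ?_ |>.2 ⟨v, ?_, ?_⟩
    · intro u hu
      rw [Finset.mem_filter] at hu ⊢
      exact ⟨hu.1, Relation.ReflTransGen.trans hu.2 hr⟩
    · exact Finset.mem_filter.2 ⟨hv, Relation.ReflTransGen.refl⟩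
    · rw [Finset.mem_filter]
      rintro ⟨-, hr'⟩
      exact hne (acyclic_antisymm hE hr' hr).symm
  exact absurd (hmin w hw) (not_le.2 (Finset.card_lt_card hsub))

lemma exists_reach_max {E : V → V → Prop} (hE : IsAcyclicD E) {S₀ : Finset V}
    (h : S₀.Nonempty) : ∃ v ∈ S₀, ∀ w ∈ S₀, Reaches E v w → w = v := by
  obtain ⟨v, hv, hmin⟩ := S₀.exists_min_image
    (fun v => (S₀.filter (fun w => Reaches E v w)).card) h
  refine ⟨v, hv, fun w hw hr => ?_⟩
  by_contra hne
  have hsub : S₀.filter (fun u => Reaches E w u) ⊂ S₀.filter (fun u => Reaches E v u) := by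
    refine Finset.ssubset_iff_of_subset ?_ |>.2 ⟨v, ?_, ?_⟩
    · intro u hu
      rw [Finset.mem_filter] at hu ⊢
      exact ⟨hu.1, Relation.ReflTransGen.trans hr hu.2⟩
    · exact Finset.mem_filter.2 ⟨hv, Relation.ReflTransGen.refl⟩
    · rw [Finset.mem_filter]
      rintro ⟨-, hr'⟩
      exact hne (acyclic_antisymm hE hr' hr)
  exact absurd (hmin w hw) (not_le.2 (Finset.card_lt_card hsub))

lemma exists_upath_avoiding {G : V → V → Prop} {S : Set V} {a b : V}
    (h : Relation.ReflTransGen (fun u w => G u w ∧ u ∉ S ∧ w ∉ S) a b) (ha : a ∉ S) :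
    ∃ p : List V, UPath G a b p ∧ ∀ v ∈ p, v ∉ S := by
  induction h with
  | refl =>
    refine ⟨[a], ⟨List.isChain_singleton a, rfl, rfl, List.nodup_singleton a⟩, ?_⟩
    intro v hv
    rw [List.mem_singleton] at hv
    subst hv; exact ha
  | @tail c b hac hcb ih =>
    obtain ⟨p, ⟨hch, hhd, hlast, hnd⟩, hpS⟩ := ih
    obtain ⟨hGcb, hcS, hbS⟩ := hcb
    have hpne : p ≠ [] := by
      intro hnil; rw [hnil] at hhd; simp at hhd
    by_cases hbp : b ∈ p
    · obtain ⟨p₁, p₂, rfl⟩ := List.append_of_mem hbp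
      have hpre : (p₁ ++ [b]) <+: (p₁ ++ b :: p₂) := ⟨p₂, by simp⟩
      refine ⟨p₁ ++ [b], ⟨hch.prefix hpre, ?_, List.getLast?_concat, hnd.sublist hpre.sublist⟩, ?_⟩
      · cases p₁ with
        | nil => simpa using hhd
        | cons hd tl => simpa using hhd
      · intro v hv
        exact hpS v (hpre.sublist.mem hv)
    · refine ⟨p ++ [b], ⟨?_, ?_, List.getLast?_concat, ?_⟩, ?_⟩
      · show List.IsChain G (p ++ [b]); rw [List.isChain_append]
        refine ⟨hch, List.isChain_singleton b, fun x hx y hy => ?_⟩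
        rw [hlast, Option.mem_some_iff] at hx
        simp only [List.head?_cons, Option.mem_some_iff] at hy
        subst hx; subst hy; exact hGcb
      · cases p with
        | nil => exact absurd rfl hpne
        | cons hd tl => simpa using hhd
      · rw [List.nodup_append]
        exact ⟨hnd, List.nodup_singleton b, by
          intro v hv w hw
          rw [List.mem_singleton] at hw
          rw [hw]; rintro rfl; exact hbp hv⟩
      · intro v hv
        rcases List.mem_append.1 hv with hv | hv
        · exact hpS v hv
        · rw [List.mem_singleton] at hv; subst hv; exact hbS

lemma forall_eq_of_sum_le {ι : Type*} (s : Finset ι) (f g : ι → ENNReal)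
    (hle : ∀ i ∈ s, f i ≤ g i) (hsum : ∑ i ∈ s, g i ≤ ∑ i ∈ s, f i)
    (hfin : ∑ i ∈ s, f i ≠ ⊤) : ∀ i ∈ s, f i = g i := by
  intro i hi
  by_contra hne
  have hlt : f i < g i := lt_of_le_of_ne (hle i hi) hne
  have h3 : ∑ j ∈ s.erase i, f j ≤ ∑ j ∈ s.erase i, g j :=
    Finset.sum_le_sum fun j hj => hle j (Finset.mem_of_mem_erase hj)
  have hfin2 : ∑ j ∈ s.erase i, f j ≠ ⊤ :=
    ne_top_of_le_ne_top hfin (Finset.sum_le_sum_of_subset (Finset.erase_subset i s))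
  have hstrict : ∑ j ∈ s, f j < ∑ j ∈ s, g j := by
    rw [← Finset.add_sum_erase s f hi, ← Finset.add_sum_erase s g hi]
    calc f i + ∑ j ∈ s.erase i, f j < g i + ∑ j ∈ s.erase i, f j :=
          ENNReal.add_lt_add_right hfin2 hlt
      _ ≤ g i + ∑ j ∈ s.erase i, g j := add_le_add (le_refl _) h3
  exact absurd hsum (not_le.2 hstrict)

/-- Configurations agreeing with `x` off the free set. -/
noncomputable def FF (x : V → α) (Free : Set V) : Finset (V → α) :=
  Finset.univ.filter (fun g => ∀ v, v ∉ Free → g v = x v)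

lemma mem_FF {x g : V → α} {Free : Set V} :
    g ∈ FF x Free ↔ ∀ v, v ∉ Free → g v = x v := by
  simp [FF]

lemma self_mem_FF (x : V → α) (Free : Set V) : x ∈ FF x Free :=
  mem_FF.2 fun _ _ => rfl

lemma FF_congr (x : V → α) {F₁ F₂ : Set V} (h : F₁ = F₂) : FF x F₁ = FF x F₂ := by rw [h]

end AuxLemmas2
section AuxLemmas3
open Classical MeasureTheory ProbabilityTheory
set_option linter.unusedSectionVars false

variable {V Ω α : Type*} [Fintype V] [DecidableEq V] [Fintype α] [MeasurableSpace Ω]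
  [MeasurableSpace α] [MeasurableSingletonClass α]

lemma eventOn_marginal (P : Measure Ω) {X : V → Ω → α} (hX : ∀ v, Measurable (X v))
    (W T : Set V) (hT : T ⊆ W) (x : V → α) :
    P (eventOn X T x) = ∑ g ∈ FF x (W \ T), P (eventOn X W g) := by
  have hdisj : (↑(FF x (W \ T)) : Set (V → α)).PairwiseDisjoint (fun g => eventOn X W g) := by
    intro g hg g' hg' hne
    rw [Finset.mem_coe, mem_FF] at hg hg'
    obtain ⟨u, hu⟩ := Function.ne_iff.1 hne
    have huW : u ∈ W := by
      by_cases h : u ∈ W \ T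
      · exact h.1
      · exact absurd (by rw [hg u h, hg' u h]) hu
    refine Set.disjoint_left.2 fun ω h1 h2 => hu ?_
    rw [← h1 u huW, ← h2 u huW]
  have hunion : (⋃ g ∈ FF x (W \ T), eventOn X W g) = eventOn X T x := by
    ext ω
    constructor
    · rintro hω
      rcases Set.mem_iUnion₂.1 hω with ⟨g, hg, hωg⟩
      rw [mem_FF] at hg
      intro v hv
      rw [hωg v (hT hv), hg v (fun h => h.2 hv)]
    · intro hω
      refine Set.mem_iUnion₂.2 ⟨fun v => if v ∈ W \ T then X v ω else x v, mem_FF.2 ?_, ?_⟩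
      · intro v hv; rw [if_neg hv]
      · intro v hv
        dsimp only
        by_cases h : v ∈ W \ T
        · rw [if_pos h]
        · rw [if_neg h]
          exact hω v (by
            by_contra hT'
            exact h ⟨hv, hT'⟩)
  rw [← hunion, measure_biUnion_finset hdisj fun g _ => measurableSet_eventOn hX _ _]

lemma sum_FF_mul_split (x : V → α) (C₁ C₂ : Set V) (hd : ∀ v, v ∈ C₁ → v ∉ C₂)
    (f h : (V → α) → ENNReal)
    (hf : ∀ g g' : V → α, (∀ v, v ∉ C₂ → g v = g' v) → f g = f g')
    (hh : ∀ g g' : V → α, (∀ v, v ∉ C₁ → g v = g' v) → h g = h g') :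
    ∑ g ∈ FF x (C₁ ∪ C₂), f g * h g = (∑ g ∈ FF x C₁, f g) * (∑ g ∈ FF x C₂, h g) := by
  rw [Finset.sum_mul_sum, ← Finset.sum_product']
  refine Finset.sum_bij'
    (i := fun g _ => ((fun v => if v ∈ C₁ then g v else x v : V → α),
                      (fun v => if v ∈ C₂ then g v else x v : V → α)))
    (j := fun p _ => fun v => if v ∈ C₁ then p.1 v else p.2 v) ?_ ?_ ?_ ?_ ?_
  · intro g hg
    rw [mem_FF] at hg
    rw [Finset.mem_product]
    constructor <;> rw [mem_FF] <;> intro v hv <;> dsimp only <;> rw [if_neg hv]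
  · intro p hp
    rw [Finset.mem_product, mem_FF, mem_FF] at hp
    rw [mem_FF]
    intro v hv
    rw [Set.mem_union] at hv
    push_neg at hv
    rw [if_neg hv.1]
    exact hp.2 v hv.2
  · intro g hg
    rw [mem_FF] at hg
    dsimp only
    funext v
    by_cases h1 : v ∈ C₁
    · simp only [if_pos h1]
    · simp only [if_neg h1]
      by_cases h2 : v ∈ C₂
      · rw [if_pos h2]
      · rw [if_neg h2]
        exact (hg v (fun hv => (Set.mem_union v C₁ C₂).1 hv |>.elim h1 h2)).symm
  · intro p hp
    rw [Finset.mem_product, mem_FF, mem_FF] at hp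
    dsimp only
    have e1 : (fun v => if v ∈ C₁ then (if v ∈ C₁ then p.1 v else p.2 v) else x v) = p.1 := by
      funext v
      by_cases h1 : v ∈ C₁
      · rw [if_pos h1, if_pos h1]
      · rw [if_neg h1, (hp.1 v h1)]
    have e2 : (fun v => if v ∈ C₂ then (if v ∈ C₁ then p.1 v else p.2 v) else x v) = p.2 := by
      funext v
      by_cases h2 : v ∈ C₂
      · rw [if_pos h2, if_neg (fun h1 => hd v h1 h2)]
      · rw [if_neg h2, (hp.2 v h2)]
    exact Prod.ext e1 e2
  · intro g hg
    rw [mem_FF] at hg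
    have hfg : f g = f (fun v => if v ∈ C₁ then g v else x v) := by
      apply hf
      intro v hv2
      by_cases h1 : v ∈ C₁
      · rw [if_pos h1]
      · rw [if_neg h1]
        exact hg v (fun hv => (Set.mem_union v C₁ C₂).1 hv |>.elim h1 hv2)
    have hhg : h g = h (fun v => if v ∈ C₂ then g v else x v) := by
      apply hh
      intro v hv1
      by_cases h2 : v ∈ C₂
      · rw [if_pos h2]
      · rw [if_neg h2]
        exact hg v (fun hv => (Set.mem_union v C₁ C₂).1 hv |>.elim hv1 h2)
    rw [← hfg, ← hhg]

end AuxLemmas3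
section AuxLemmas4
open Classical MeasureTheory ProbabilityTheory
set_option linter.unusedSectionVars false

variable {V Ω α : Type*} [Fintype V] [DecidableEq V] [Fintype α] [MeasurableSpace Ω]
  [MeasurableSpace α] [MeasurableSingletonClass α]

lemma sum_prod_condP_le (P : Measure Ω) [IsProbabilityMeasure P] {E : V → V → Prop}
    (hE : IsAcyclicD E) {X : V → Ω → α} (hX : ∀ v, Measurable (X v)) :
    ∀ (U : Finset V) (x : V → α),
      ∑ g ∈ FF x (↑U), ∏ u ∈ U, condP P E X u g ≤ 1 := by
  suffices H : ∀ (n : ℕ) (U : Finset V), U.card = n → ∀ x : V → α,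
      ∑ g ∈ FF x (↑U), ∏ u ∈ U, condP P E X u g ≤ 1 from
    fun U x => H U.card U rfl x
  intro n
  induction n with
  | zero =>
    intro U hU x
    rw [Finset.card_eq_zero] at hU
    subst hU
    have hFF : FF x ((↑(∅ : Finset V) : Set V)) = {x} := by
      ext g
      simp [mem_FF, funext_iff, eq_comm]
    rw [hFF]
    simp
  | succ n ih =>
    intro U hU x
    have hne : U.Nonempty := Finset.card_pos.1 (by omega)
    obtain ⟨v, hvU, hvmax⟩ := exists_reach_max hE hne
    have hsink : ∀ u ∈ U, ¬ E v u := by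
      intro u hu he
      have h1 := hvmax u hu (Relation.ReflTransGen.single he)
      exact acyclic_not_self hE v (h1 ▸ he)
    set U' := U.erase v with hU'
    have hcard' : U'.card = n := by
      rw [hU', Finset.card_erase_of_mem hvU, hU]
      omega
    have hre : ∑ g ∈ FF x (↑U), ∏ u ∈ U, condP P E X u g
        = ∑ p ∈ (FF x (↑U')) ×ˢ (Finset.univ : Finset α),
            ∏ u ∈ U, condP P E X u (Function.update p.1 v p.2) := by
      refine Finset.sum_bij' (i := fun g _ => (Function.update g v (x v), g v))
        (j := fun p _ => Function.update p.1 v p.2) ?_ ?_ ?_ ?_ ?_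
      · intro g hg
        rw [mem_FF] at hg
        rw [Finset.mem_product, mem_FF]
        refine ⟨fun u hu => ?_, Finset.mem_univ _⟩
        dsimp only
        by_cases huv : u = v
        · subst huv; simp
        · simp only [Function.update_of_ne huv]
          refine hg u (fun huU => hu ?_)
          exact Finset.mem_coe.2 (Finset.mem_erase.2 ⟨huv, Finset.mem_coe.1 huU⟩)
      · intro p hp
        rw [Finset.mem_product, mem_FF] at hp
        rw [mem_FF]
        intro u hu
        have huv : u ≠ v := fun h => hu (h ▸ Finset.mem_coe.2 hvU)
        simp only [Function.update_of_ne huv]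
        exact hp.1 u (fun h =>
          hu (Finset.mem_coe.2 (Finset.mem_of_mem_erase (Finset.mem_coe.1 h))))
      · intro g hg
        dsimp only
        funext u
        by_cases huv : u = v
        · subst huv; simp
        · simp only [Function.update_of_ne huv]
      · intro p hp
        rw [Finset.mem_product, mem_FF] at hp
        refine Prod.ext ?_ ?_
        · dsimp only
          funext u
          by_cases huv : u = v
          · subst huv
            simp only [Function.update_idem, Function.update_self]
            exact (hp.1 u (fun h =>
              (Finset.mem_erase.1 (Finset.mem_coe.1 h)).1 rfl)).symm
          · simp only [Function.update_of_ne huv]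
        · dsimp only
          simp only [Function.update_self]
      · intro g hg
        dsimp only
        simp only [Function.update_idem, Function.update_eq_self]
    rw [hre, Finset.sum_product]
    have hinner : ∀ g' ∈ FF x (↑U'),
        ∑ a : α, ∏ u ∈ U, condP P E X u (Function.update g' v a)
          ≤ ∏ u ∈ U', condP P E X u g' := by
      intro g' hg'
      have hprod : ∀ a : α, ∏ u ∈ U, condP P E X u (Function.update g' v a)
          = condP P E X v (Function.update g' v a) * ∏ u ∈ U', condP P E X u g' := by
        intro a
        rw [← Finset.mul_prod_erase U _ hvU]
        congr 1
        refine Finset.prod_congr rfl fun u hu => ?_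
        have huU : u ∈ U := Finset.mem_of_mem_erase hu
        have huv : u ≠ v := (Finset.mem_erase.1 hu).1
        apply condP_congr
        · intro w hw
          apply Function.update_of_ne
          rintro rfl
          exact hsink u huU hw
        · exact Function.update_of_ne huv _ _
      rw [Finset.sum_congr rfl fun a _ => hprod a, ← Finset.sum_mul]
      calc (∑ a : α, condP P E X v (Function.update g' v a)) * ∏ u ∈ U', condP P E X u g'
          ≤ 1 * ∏ u ∈ U', condP P E X u g' :=
            mul_le_mul_left (sum_condP_update_le_one hX (acyclic_not_self hE v) g') _
        _ = _ := one_mul _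
    calc ∑ g' ∈ FF x (↑U'), ∑ a : α, ∏ u ∈ U, condP P E X u (Function.update g' v a)
        ≤ ∑ g' ∈ FF x (↑U'), ∏ u ∈ U', condP P E X u g' := Finset.sum_le_sum hinner
      _ ≤ 1 := ih U' hcard' x

lemma fact_ancestral (P : Measure Ω) [IsProbabilityMeasure P] {E : V → V → Prop}
    (hE : IsAcyclicD E) {X : V → Ω → α} (hX : ∀ v, Measurable (X v))
    (hfact : DAGFactorizes P E X) :
    ∀ (U : Finset V), (∀ u ∈ U, ∀ w, E w u → w ∈ U) → ∀ x : V → α,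
      P (eventOn X (↑U) x) = ∏ u ∈ U, condP P E X u x := by
  suffices H : ∀ (n : ℕ) (U : Finset V), (Finset.univ \ U).card = n →
      (∀ u ∈ U, ∀ w, E w u → w ∈ U) → ∀ x : V → α,
      P (eventOn X (↑U) x) = ∏ u ∈ U, condP P E X u x from
    fun U hanc x => H _ U rfl hanc x
  intro n
  induction n with
  | zero =>
    intro U hcard hanc x
    have hU : U = Finset.univ := by
      rw [Finset.card_eq_zero, Finset.sdiff_eq_empty_iff_subset] at hcard
      exact Finset.eq_univ_iff_forall.2 fun v => hcard (Finset.mem_univ v)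
    subst hU
    rw [Finset.coe_univ]
    exact hfact x
  | succ n ih =>
    intro U hcard hanc x
    have hne : (Finset.univ \ U).Nonempty := Finset.card_pos.1 (by omega)
    obtain ⟨v, hv, hvmin⟩ := exists_reach_min hE hne
    have hvU : v ∉ U := (Finset.mem_sdiff.1 hv).2
    have hpa : ∀ w, E w v → w ∈ U := by
      intro w hw
      by_contra hwU
      have hwv := hvmin w (Finset.mem_sdiff.2 ⟨Finset.mem_univ w, hwU⟩)
        (Relation.ReflTransGen.single hw)
      exact acyclic_not_self hE v (hwv ▸ hw)
    set U' := insert v U with hU'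
    have hanc' : ∀ u ∈ U', ∀ w, E w u → w ∈ U' := by
      intro u hu w hw
      rcases Finset.mem_insert.1 hu with rfl | hu
      · exact Finset.mem_insert_of_mem (hpa w hw)
      · exact Finset.mem_insert_of_mem (hanc u hu w hw)
    have hcard' : (Finset.univ \ U').card = n := by
      have hsd : Finset.univ \ U' = (Finset.univ \ U).erase v := by
        ext u
        simp only [hU', Finset.mem_sdiff, Finset.mem_erase, Finset.mem_insert, Finset.mem_univ,
          true_and]
        tauto
      rw [hsd, Finset.card_erase_of_mem hv, hcard]
      omega
    have IH := ih U' hcard' hanc'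
    have key : ∀ y : V → α, P (eventOn X (↑U) y) =
        (∑ a : α, condP P E X v (Function.update y v a)) * ∏ u ∈ U, condP P E X u y := by
      intro y
      rw [sum_P_eventOn_insert hX (fun h => hvU (Finset.mem_coe.1 h)) y]
      have hterm : ∀ a : α, P (eventOn X (insert v (↑U : Set V)) (Function.update y v a))
          = condP P E X v (Function.update y v a) * ∏ u ∈ U, condP P E X u y := by
        intro a
        rw [← Finset.coe_insert, ← hU', IH (Function.update y v a), hU',
          Finset.prod_insert hvU]
        congr 1
        refine Finset.prod_congr rfl fun u hu => ?_
        apply condP_congr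
        · intro w hw
          apply Function.update_of_ne
          rintro rfl
          exact hvU (hanc u hu _ hw)
        · refine Function.update_of_ne (fun h => hvU ?_) _ _
          exact h ▸ hu
      rw [Finset.sum_congr rfl fun a _ => hterm a, ← Finset.sum_mul]
    have hle : ∀ y : V → α, P (eventOn X (↑U) y) ≤ ∏ u ∈ U, condP P E X u y := by
      intro y
      rw [key y]
      calc _ ≤ 1 * ∏ u ∈ U, condP P E X u y :=
          mul_le_mul_left (sum_condP_update_le_one hX (acyclic_not_self hE v) y) _
        _ = _ := one_mul _
    have hcover : ∑ g ∈ FF x (↑U), P (eventOn X (↑U) g) = 1 := by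
      have hm := eventOn_marginal P hX (↑U) ∅ (Set.empty_subset _) x
      rw [Set.diff_empty] at hm
      have he : eventOn X (∅ : Set V) x = Set.univ := by ext ω; simp [eventOn]
      rw [he] at hm
      rw [← hm]
      exact measure_univ
    have hsum := sum_prod_condP_le P hE hX U x
    have hmain := forall_eq_of_sum_le (FF x (↑U)) (fun g => P (eventOn X (↑U) g))
      (fun g => ∏ u ∈ U, condP P E X u g) (fun g _ => hle g)
      (le_trans hsum hcover.ge)
      (ne_top_of_le_ne_top ENNReal.one_ne_top hcover.le)
    exact hmain x (self_mem_FF x (↑U))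

end AuxLemmas4
open Classical MeasureTheory ProbabilityTheory in
lemma moral_core {V Ω α : Type*} [Fintype V] [DecidableEq V] [Fintype α] [MeasurableSpace Ω]
    [MeasurableSpace α] [MeasurableSingletonClass α]
    (P : Measure Ω) [IsProbabilityMeasure P]
    (E : V → V → Prop) (hE : IsAcyclicD E)
    (X : V → Ω → α) (hX : ∀ v, Measurable (X v))
    (hfact : DAGFactorizes P E X)
    (A B S W : Set V)
    (hWanc : ∀ u ∈ W, ∀ w, E w u → w ∈ W)
    (hAW : A ⊆ W) (hBW : B ⊆ W) (hSW : S ⊆ W)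
    (hsep : USep (Moral (InducedE E W)) A B S) :
    CCI P X A B S := by
  classical
  intro x
  have hGW : ∀ u w, Moral (InducedE E W) u w → u ∈ W ∧ w ∈ W := by
    rintro u w ⟨hne, (⟨-, h1, h2⟩ | ⟨-, h1, h2⟩ | ⟨c, ⟨-, h1, -⟩, ⟨-, h2, -⟩⟩)⟩
    exacts [⟨h1, h2⟩, ⟨h2, h1⟩, ⟨h1, h2⟩]
  have hGsymm : ∀ u w, Moral (InducedE E W) u w → Moral (InducedE E W) w u := by
    rintro u w ⟨hne, (h | h | ⟨c, h1, h2⟩)⟩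
    exacts [⟨hne.symm, Or.inr (Or.inl h)⟩, ⟨hne.symm, Or.inl h⟩,
      ⟨hne.symm, Or.inr (Or.inr ⟨c, h2, h1⟩)⟩]
  let C : Set V := {v | v ∉ S ∧ ∃ a, a ∈ A ∧ a ∉ S ∧
    Relation.ReflTransGen (fun u w => Moral (InducedE E W) u w ∧ u ∉ S ∧ w ∉ S) a v}
  have hCmem : ∀ v, v ∈ C ↔ (v ∉ S ∧ ∃ a, a ∈ A ∧ a ∉ S ∧
      Relation.ReflTransGen (fun u w => Moral (InducedE E W) u w ∧ u ∉ S ∧ w ∉ S) a v) :=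
    fun v => Iff.rfl
  have hCS : ∀ v ∈ C, v ∉ S := fun v hv => ((hCmem v).1 hv).1
  have hCclosed : ∀ v ∈ C, ∀ w, Moral (InducedE E W) v w → w ∉ S → w ∈ C := by
    intro v hv w hGvw hwS
    obtain ⟨hvS, a, haA, haS, hr⟩ := (hCmem v).1 hv
    exact (hCmem w).2 ⟨hwS, a, haA, haS, hr.tail ⟨hGvw, hvS, hwS⟩⟩
  have hCW : C ⊆ W := by
    intro v hv
    obtain ⟨hvS, a, haA, haS, hr⟩ := (hCmem v).1 hv
    rcases Relation.ReflTransGen.cases_tail hr with heq | ⟨u, -, hu⟩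
    · rw [heq]; exact hAW haA
    · exact (hGW u v hu.1).2
  have hAC : ∀ a ∈ A, a ∉ S → a ∈ C := fun a ha haS =>
    (hCmem a).2 ⟨haS, a, ha, haS, Relation.ReflTransGen.refl⟩
  have hBC : ∀ b ∈ B, b ∉ C := by
    intro b hb hbC
    obtain ⟨hbS, a, haA, haS, hr⟩ := (hCmem b).1 hbC
    obtain ⟨p, hp, hpS⟩ := exists_upath_avoiding hr haS
    obtain ⟨s, hsS, hsp⟩ := hsep a haA b hb p hp
    exact hpS s hsp hsS
  have hKW : ∀ u ∈ W, ∀ k, (k = u ∨ E k u) → k ∈ W := by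
    rintro u hu k (rfl | hk)
    · exact hu
    · exact hWanc u hu k hk
  have hKclique : ∀ u ∈ W, ∀ k₁ k₂, (k₁ = u ∨ E k₁ u) → (k₂ = u ∨ E k₂ u) → k₁ ≠ k₂ →
      Moral (InducedE E W) k₁ k₂ := by
    intro u hu k₁ k₂ h1 h2 hne
    have hIk : ∀ k, E k u → InducedE E W k u := fun k hk => ⟨hk, hWanc u hu k hk, hu⟩
    rcases h1 with rfl | h1 <;> rcases h2 with rfl | h2
    · exact absurd rfl hne
    · exact ⟨hne, Or.inr (Or.inl (hIk k₂ h2))⟩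
    · exact ⟨hne, Or.inl (hIk k₁ h1)⟩
    · exact ⟨hne, Or.inr (Or.inr ⟨u, hIk k₁ h1, hIk k₂ h2⟩)⟩
  let φ : V → Prop := fun u => ∃ k, (k = u ∨ E k u) ∧ k ∈ C
  have hφC : ∀ u ∈ W, φ u → ∀ k, (k = u ∨ E k u) → k ∈ C ∪ S := by
    intro u hu hφu k hk
    obtain ⟨k₀, hk₀, hk₀C⟩ := hφu
    by_cases hkS : k ∈ S
    · exact Or.inr hkS
    by_cases hkk : k = k₀
    · exact Or.inl (hkk ▸ hk₀C)
    · exact Or.inl (hCclosed k₀ hk₀C k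
        (hKclique u hu k₀ k hk₀ hk (fun heq2 => hkk heq2.symm)) hkS)
  have hφD : ∀ u, ¬ φ u → ∀ k, (k = u ∨ E k u) → k ∉ C := fun u hn k hk hkC => hn ⟨k, hk, hkC⟩
  let D : Set V := {v | v ∈ W ∧ v ∉ S ∧ v ∉ C}
  have hDmem : ∀ v, v ∈ D ↔ (v ∈ W ∧ v ∉ S ∧ v ∉ C) := fun v => Iff.rfl
  let WF : Finset V := Finset.univ.filter (· ∈ W)
  have hWFmem : ∀ u, u ∈ WF ↔ u ∈ W := by intro u; simp [WF]
  have hWFcoe : (↑WF : Set V) = W := by ext u; simp [WF]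
  have hWFanc : ∀ u ∈ WF, ∀ w, E w u → w ∈ WF := fun u hu w hw =>
    (hWFmem w).2 (hWanc u ((hWFmem u).1 hu) w hw)
  have hPW : ∀ g : V → α, P (eventOn X W g) = ∏ u ∈ WF, condP P E X u g := by
    intro g
    rw [← hWFcoe]
    exact fact_ancestral P hE hX hfact WF hWFanc g
  let f : (V → α) → ENNReal := fun g => ∏ u ∈ WF.filter (fun u => φ u), condP P E X u g
  let h : (V → α) → ENNReal := fun g => ∏ u ∈ WF.filter (fun u => ¬ φ u), condP P E X u g
  have hfh : ∀ g, f g * h g = P (eventOn X W g) := by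
    intro g
    rw [hPW g]
    exact Finset.prod_filter_mul_prod_filter_not WF _ _
  have hfd : ∀ g g' : V → α, (∀ v ∈ C ∪ S, g v = g' v) → f g = f g' := by
    intro g g' hgg
    refine Finset.prod_congr rfl fun u hu => ?_
    rw [Finset.mem_filter] at hu
    have huW : u ∈ W := (hWFmem u).1 hu.1
    apply condP_congr
    · intro w hw
      exact hgg w (hφC u huW hu.2 w (Or.inr hw))
    · exact hgg u (hφC u huW hu.2 u (Or.inl rfl))
  have hhd : ∀ g g' : V → α, (∀ v, (v ∈ D ∨ v ∈ S) → g v = g' v) → h g = h g' := by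
    intro g g' hgg
    refine Finset.prod_congr rfl fun u hu => ?_
    rw [Finset.mem_filter] at hu
    have huW : u ∈ W := (hWFmem u).1 hu.1
    have hk : ∀ k, (k = u ∨ E k u) → (k ∈ D ∨ k ∈ S) := by
      intro k hkk
      by_cases hkS : k ∈ S
      · exact Or.inr hkS
      · exact Or.inl ((hDmem k).2 ⟨hKW u huW k hkk, hkS, hφD u hu.2 k hkk⟩)
    apply condP_congr
    · intro w hw; exact hgg w (hk w (Or.inr hw))
    · exact hgg u (hk u (Or.inl rfl))
  have hmain : ∀ T : Set V, S ⊆ T → T ⊆ W →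
      P (eventOn X T x) = (∑ g ∈ FF x (C \ T), f g) * (∑ g ∈ FF x (D \ T), h g) := by
    intro T hST hTW
    rw [eventOn_marginal P hX W T hTW x]
    have hsplit : W \ T = (C \ T) ∪ (D \ T) := by
      ext v
      constructor
      · rintro ⟨hvW, hvT⟩
        have hvS : v ∉ S := fun hh => hvT (hST hh)
        by_cases hvC : v ∈ C
        · exact Or.inl ⟨hvC, hvT⟩
        · exact Or.inr ⟨(hDmem v).2 ⟨hvW, hvS, hvC⟩, hvT⟩
      · rintro (⟨hvC, hvT⟩ | ⟨hvD, hvT⟩)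
        · exact ⟨hCW hvC, hvT⟩
        · exact ⟨((hDmem v).1 hvD).1, hvT⟩
    rw [FF_congr x hsplit]
    rw [Finset.sum_congr rfl fun g _ => (hfh g).symm]
    apply sum_FF_mul_split
    · rintro v ⟨hv1, -⟩ ⟨hv2, -⟩
      exact ((hDmem v).1 hv2).2.2 hv1
    · intro g g' hgg
      apply hfd
      intro v hv
      apply hgg
      rintro ⟨hvD, -⟩
      rcases hv with hvC | hvS
      · exact ((hDmem v).1 hvD).2.2 hvC
      · exact ((hDmem v).1 hvD).2.1 hvS
    · intro g g' hgg
      apply hhd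
      intro v hv
      apply hgg
      rintro ⟨hvC, -⟩
      rcases hv with hvD | hvS
      · exact ((hDmem v).1 hvD).2.2 hvC
      · exact hCS v hvC hvS
  have hsplitS := hmain S (subset_refl S) hSW
  have hsplitAS := hmain (A ∪ S) Set.subset_union_right (Set.union_subset hAW hSW)
  have hsplitBS := hmain (B ∪ S) Set.subset_union_right (Set.union_subset hBW hSW)
  have hsplitABS := hmain (A ∪ B ∪ S) Set.subset_union_right
    (Set.union_subset (Set.union_subset hAW hBW) hSW)
  have hCdS : C \ S = C := by
    ext v
    exact ⟨fun hv => hv.1, fun hv => ⟨hv, hCS v hv⟩⟩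
  have hCdAS : C \ (A ∪ S) = C \ A := by
    ext v
    constructor
    · rintro ⟨h1, h2⟩; exact ⟨h1, fun hA => h2 (Or.inl hA)⟩
    · rintro ⟨h1, h2⟩
      exact ⟨h1, fun hv => hv.elim h2 (hCS v h1)⟩
  have hCdBS : C \ (B ∪ S) = C := by
    ext v
    constructor
    · rintro ⟨h1, -⟩; exact h1
    · intro hv
      exact ⟨hv, fun hh => hh.elim (fun hB => hBC v hB hv) (hCS v hv)⟩
  have hCdABS : C \ (A ∪ B ∪ S) = C \ A := by
    ext v
    constructor
    · rintro ⟨h1, h2⟩; exact ⟨h1, fun hA => h2 (Or.inl (Or.inl hA))⟩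
    · rintro ⟨h1, h2⟩
      refine ⟨h1, fun hv => ?_⟩
      rcases hv with (hA | hB) | hS
      · exact h2 hA
      · exact hBC v hB h1
      · exact hCS v h1 hS
  have hDS : ∀ v ∈ D, v ∉ S := fun v hv => ((hDmem v).1 hv).2.1
  have hDA : ∀ v ∈ D, v ∉ A := fun v hv hA =>
    ((hDmem v).1 hv).2.2 (hAC v hA (hDS v hv))
  have hDdS : D \ S = D := by
    ext v
    exact ⟨fun hv => hv.1, fun hv => ⟨hv, hDS v hv⟩⟩
  have hDdAS : D \ (A ∪ S) = D := by
    ext v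
    constructor
    · rintro ⟨h1, -⟩; exact h1
    · intro hv
      exact ⟨hv, fun hh => hh.elim (hDA v hv) (hDS v hv)⟩
  have hDdBS : D \ (B ∪ S) = D \ B := by
    ext v
    constructor
    · rintro ⟨h1, h2⟩; exact ⟨h1, fun hB => h2 (Or.inl hB)⟩
    · rintro ⟨h1, h2⟩
      exact ⟨h1, fun hv => hv.elim h2 (hDS v h1)⟩
  have hDdABS : D \ (A ∪ B ∪ S) = D \ B := by
    ext v
    constructor
    · rintro ⟨h1, h2⟩; exact ⟨h1, fun hB => h2 (Or.inl (Or.inr hB))⟩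
    · rintro ⟨h1, h2⟩
      refine ⟨h1, fun hv => ?_⟩
      rcases hv with (hA | hB) | hS
      · exact hDA v h1 hA
      · exact h2 hB
      · exact hDS v h1 hS
  rw [hCdS, hDdS] at hsplitS
  rw [hCdAS, hDdAS] at hsplitAS
  rw [hCdBS, hDdBS] at hsplitBS
  rw [hCdABS, hDdABS] at hsplitABS
  rw [hsplitS, hsplitAS, hsplitBS, hsplitABS]
  ring

/-- If a joint distribution of discrete variables factorizes according to a DAG `E`, and
`A`, `B` are separated by `S` in the moral graph of the ancestral subgraph generated by
`A ∪ B ∪ S`, then `A ⊥⊥ B | S` holds in the distribution. -/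
theorem moralisation_implies_conditional_independence
    {V Ω α : Type*} [Fintype V] [DecidableEq V] [Fintype α] [MeasurableSpace Ω]
    [MeasurableSpace α] [MeasurableSingletonClass α]
    (P : Measure Ω) [IsProbabilityMeasure P]
    (E : V → V → Prop) (hE : IsAcyclicD E)
    (X : V → Ω → α) (hX : ∀ v, Measurable (X v))
    (hfact : DAGFactorizes P E X)
    (A B S : Set V)
    (hsep : USep (Moral (InducedE E (AncSet E (A ∪ B ∪ S)))) A B S) :
    CCI P X A B S := by
  refine moral_core P E hE X hX hfact A B S (AncSet E (A ∪ B ∪ S)) ?_ ?_ ?_ ?_ hsep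
  · rintro u ⟨t, ht, hr⟩ w hw
    exact ⟨t, ht, Relation.ReflTransGen.head hw hr⟩
  · exact fun v hv =>
      ⟨v, Set.mem_union_left _ (Set.mem_union_left _ hv), Relation.ReflTransGen.refl⟩
  · exact fun v hv =>
      ⟨v, Set.mem_union_left _ (Set.mem_union_right _ hv), Relation.ReflTransGen.refl⟩
  · exact fun v hv => ⟨v, Set.mem_union_right _ hv, Relation.ReflTransGen.refl⟩
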